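/- (Limitation on entropy lower bounds) Let B be any function mapping the type T(S) of an N-element multiset S and δ ∈ (0,1) to a real, such that for every distribution p on a countable set, Pr_{S∼p^N}( H(p) ≥ B(T(S), δ) ) ≥ 1 − δ. Then for N ≥ 50, k ≥ 2, and any distribution p, Pr_{S∼p^N}( B(T(S), δ) ≤ ln(2kN²) ) ≥ 1 − δ − 1.01/k. -/

import Mathlib

open MeasureTheory

/-- The type of a multiset `S`: `i ↦` the number of distinct elements
occurring exactly `i` times in `S`. -/
def multisetType {X : Type*} [DecidableEq X] (S : Multiset X) : ℕ → ℕ :=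
  fun i => (S.toFinset.filter fun x => S.count x = i).card

open scoped ENNReal NNReal

set_option linter.unusedSectionVars false

namespace EntropyLimitAux

lemma card_pairs (N : ℕ) : 2 * Fintype.card {q : Fin N × Fin N // q.1 < q.2} ≤ N * N := by
  classical
  rw [Fintype.card_subtype]
  let A := Finset.univ.filter fun q : Fin N × Fin N => q.1 < q.2
  let B := Finset.univ.filter fun q : Fin N × Fin N => q.2 < q.1
  have hcard : A.card = B.card := by
    refine Finset.card_bij' (fun q _ => (q.2, q.1)) (fun q _ => (q.2, q.1)) ?_ ?_ ?_ ?_ <;>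
      intro q hq <;> simp_all [A, B, Finset.mem_filter] <;> exact (Finset.mem_filter.1 hq).2
  have hdisj : Disjoint A B := by
    rw [Finset.disjoint_left]
    intro q hqA hqB
    simp only [A, B, Finset.mem_filter, Finset.mem_univ, true_and] at hqA hqB
    exact absurd (hqA.trans hqB) (lt_irrefl _)
  show 2 * A.card ≤ N * N
  calc 2 * A.card = A.card + B.card := by omega
    _ = (A ∪ B).card := (Finset.card_union_of_disjoint hdisj).symm
    _ ≤ Fintype.card (Fin N × Fin N) := Finset.card_le_univ _
    _ = N * N := by simp [Fintype.card_prod]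

lemma pairs_bound (N k : ℕ) (hN : 1 ≤ N) (hk : 1 ≤ k) :
    (Fintype.card {q : Fin N × Fin N // q.1 < q.2} : ℝ≥0∞) * ((k * N ^ 2 : ℕ) : ℝ≥0∞)⁻¹
      ≤ ENNReal.ofReal (0.505 / k) := by
  set c := Fintype.card {q : Fin N × Fin N // q.1 < q.2} with hc
  have hcard : 2 * c ≤ N * N := card_pairs N
  have hM0 : (k * N ^ 2 : ℕ) ≠ 0 := by positivity
  have hMne : ((k * N ^ 2 : ℕ) : ℝ≥0∞) ≠ 0 := by exact_mod_cast hM0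
  have h1 : (c : ℝ≥0∞) * ((k * N ^ 2 : ℕ) : ℝ≥0∞)⁻¹ ≤ (((2 * k : ℕ)) : ℝ≥0∞)⁻¹ := by
    rw [ENNReal.le_inv_iff_mul_le]
    have hnat : c * (2 * k) ≤ k * N ^ 2 := by
      calc c * (2 * k) = k * (2 * c) := by ring
        _ ≤ k * (N * N) := Nat.mul_le_mul_left k hcard
        _ = k * N ^ 2 := by ring
    calc (c : ℝ≥0∞) * ((k * N ^ 2 : ℕ) : ℝ≥0∞)⁻¹ * ((2 * k : ℕ) : ℝ≥0∞)
        = ((c * (2 * k) : ℕ) : ℝ≥0∞) * ((k * N ^ 2 : ℕ) : ℝ≥0∞)⁻¹ := by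
          push_cast; ring
      _ ≤ ((k * N ^ 2 : ℕ) : ℝ≥0∞) * ((k * N ^ 2 : ℕ) : ℝ≥0∞)⁻¹ := by
          exact mul_le_mul_left (by exact_mod_cast hnat) _
      _ = 1 := ENNReal.mul_inv_cancel hMne (ENNReal.natCast_ne_top _)
  refine le_trans h1 ?_
  have h2k : (0:ℝ) < ((2 * k : ℕ) : ℝ) := by positivity
  rw [← ENNReal.ofReal_natCast (2 * k), ← ENNReal.ofReal_inv_of_pos h2k]
  refine ENNReal.ofReal_le_ofReal ?_
  have hkR : (1:ℝ) ≤ (k:ℝ) := by exact_mod_cast hk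
  rw [inv_eq_one_div, div_le_div_iff₀ h2k (by linarith)]
  push_cast
  nlinarith

section Aux
variable {X : Type*} [Countable X] [DecidableEq X] [MeasurableSpace X] [MeasurableSingletonClass X]

lemma measAll {α : Type*} [Countable α] [MeasurableSpace α] [MeasurableSingletonClass α]
    (s : Set α) : MeasurableSet s := s.to_countable.measurableSet

lemma pi_cyl (N : ℕ) (p : PMF X) (i j : Fin N) (hij : i ≠ j) (x : X) :
    (Measure.pi fun _ : Fin N => p.toMeasure) {s | s i = x ∧ s j = x} = p x ^ 2 := by
  have : {s : Fin N → X | s i = x ∧ s j = x}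
      = Set.pi Set.univ (fun l => if l = i ∨ l = j then {x} else Set.univ) := by
    ext s
    simp only [Set.mem_setOf_eq, Set.mem_pi, Set.mem_univ, forall_true_left]
    constructor
    · rintro ⟨h1, h2⟩ l
      by_cases hl : l = i ∨ l = j
      · rcases hl with h | h <;> simp [h, h1, h2]
      · simp [hl]
    · intro h
      constructor
      · have := h i; simpa using this
      · have := h j; simp only [or_true, if_pos] at this; simpa using this
  rw [this, Measure.pi_pi]
  have hval : ∀ l : Fin N, p.toMeasure (if l = i ∨ l = j then ({x} : Set X) else Set.univ)
      = if l = i ∨ l = j then p x else 1 := by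
    intro l
    by_cases hl : l = i ∨ l = j
    · simp only [hl, if_true]
      exact p.toMeasure_apply_singleton _ (measurableSet_singleton _)
    · simp [hl]
  rw [Finset.prod_congr rfl fun l _ => hval l]
  have : ∀ l : Fin N, (l = i ∨ l = j) ↔ l ∈ ({i, j} : Finset (Fin N)) := by simp
  rw [Finset.prod_congr rfl fun l _ => by rw [if_congr (this l) rfl rfl]]
  rw [Finset.prod_ite_mem Finset.univ ({i, j} : Finset (Fin N)) (fun _ => p x)]
  rw [Finset.univ_inter, Finset.prod_const, Finset.card_insert_of_notMem (by simpa using hij),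
    Finset.card_singleton]

/-- Reduction of one sample: keep it if it is in the head set `H`, else `none`. -/
def r0 (H : Finset X) (x : X) : Option X := if x ∈ H then some x else none

/-- Coordinatewise reduction of a tuple of samples. -/
def headMap (H : Finset X) (N : ℕ) (s : Fin N → X) : Fin N → Option X := fun i => r0 H (s i)

/-- The no-tail-collision event. -/
def NCset (H : Finset X) (N : ℕ) : Set (Fin N → X) :=
  {s | ∀ i j : Fin N, i < j → s i = s j → s i ∈ H}

lemma collision_bound (N : ℕ) (p : PMF X) (H : Finset X) (M : ℕ)
    (hp : ∀ x ∉ H, p x ≤ (M : ℝ≥0∞)⁻¹) :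
    (Measure.pi fun _ : Fin N => p.toMeasure) (NCset H N)ᶜ
      ≤ (Fintype.card {q : Fin N × Fin N // q.1 < q.2} : ℝ≥0∞) * (M : ℝ≥0∞)⁻¹ := by
  set μ := Measure.pi fun _ : Fin N => p.toMeasure
  have hsub : (NCset H N)ᶜ ⊆
      ⋃ σ : {q : Fin N × Fin N // q.1 < q.2}, ⋃ x : {x : X // x ∉ H},
        {s : Fin N → X | s σ.1.1 = x ∧ s σ.1.2 = x} := by
    intro s hs
    simp only [NCset, Set.mem_compl_iff, Set.mem_setOf_eq, not_forall] at hs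
    obtain ⟨i, j, hij, heq, hmem⟩ := hs
    refine Set.mem_iUnion.2 ⟨⟨(i, j), hij⟩, Set.mem_iUnion.2 ⟨⟨s i, hmem⟩, ?_⟩⟩
    exact ⟨rfl, heq.symm⟩
  refine le_trans (measure_mono hsub) (le_trans (measure_iUnion_le _) ?_)
  have hinner : ∀ σ : {q : Fin N × Fin N // q.1 < q.2},
      μ (⋃ x : {x : X // x ∉ H}, {s : Fin N → X | s σ.1.1 = x ∧ s σ.1.2 = x})
        ≤ (M : ℝ≥0∞)⁻¹ := by
    intro σ
    rw [measure_iUnion ?_ (fun _ => measAll _)]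
    · have h1 : ∀ x : {x : X // x ∉ H},
          μ {s : Fin N → X | s σ.1.1 = x ∧ s σ.1.2 = x} = p x ^ 2 := fun x =>
        pi_cyl N p σ.1.1 σ.1.2 (ne_of_lt σ.2) x
      calc ∑' x : {x : X // x ∉ H}, μ {s : Fin N → X | s σ.1.1 = x ∧ s σ.1.2 = x}
          = ∑' x : {x : X // x ∉ H}, p x ^ 2 := by exact tsum_congr h1
        _ ≤ ∑' x : {x : X // x ∉ H}, (M : ℝ≥0∞)⁻¹ * p x := by
            refine ENNReal.tsum_le_tsum fun x => ?_
            rw [sq]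
            exact mul_le_mul_left (hp x x.2) _
        _ = (M : ℝ≥0∞)⁻¹ * ∑' x : {x : X // x ∉ H}, p x := ENNReal.tsum_mul_left
        _ ≤ (M : ℝ≥0∞)⁻¹ * 1 := by
            refine mul_le_mul_right ?_ _
            refine le_trans (ENNReal.tsum_comp_le_tsum_of_injective Subtype.val_injective p) ?_
            rw [p.tsum_coe]
        _ = (M : ℝ≥0∞)⁻¹ := mul_one _
    · intro x y hxy
      simp only [Function.onFun, Set.disjoint_left, Set.mem_setOf_eq]
      rintro s ⟨h1, _⟩ ⟨h2, _⟩
      exact hxy (Subtype.ext (h1 ▸ h2 ▸ rfl))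
  calc ∑' σ : {q : Fin N × Fin N // q.1 < q.2},
        μ (⋃ x : {x : X // x ∉ H}, {s : Fin N → X | s σ.1.1 = x ∧ s σ.1.2 = x})
      ≤ ∑' _ : {q : Fin N × Fin N // q.1 < q.2}, (M : ℝ≥0∞)⁻¹ :=
        ENNReal.tsum_le_tsum hinner
    _ = (Fintype.card {q : Fin N × Fin N // q.1 < q.2} : ℝ≥0∞) * (M : ℝ≥0∞)⁻¹ := by
        rw [tsum_fintype]
        simp [Finset.sum_const, nsmul_eq_mul]

lemma preimage_headMap_singleton (H : Finset X) (N : ℕ) (t : Fin N → Option X) :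
    headMap H N ⁻¹' {t} = Set.pi Set.univ (fun i => r0 H ⁻¹' {t i}) := by
  ext s
  simp only [Set.mem_preimage, Set.mem_singleton_iff, Set.mem_pi, Set.mem_univ, forall_true_left,
    headMap]
  exact ⟨fun h i => by rw [← h]; rfl, fun h => funext h⟩

lemma measure_preimage_headMap (N : ℕ) (p : PMF X) (H : Finset X)
    (C : Set (Fin N → Option X)) :
    (Measure.pi fun _ : Fin N => p.toMeasure) (headMap H N ⁻¹' C)
      = ∑' t : C, ∏ i, p.toMeasure (r0 H ⁻¹' {(t : Fin N → Option X) i}) := by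
  rw [← Set.biUnion_preimage_singleton (headMap H N) C]
  rw [measure_biUnion C.to_countable ?_ (fun _ _ => measAll _)]
  · exact tsum_congr fun t => by rw [preimage_headMap_singleton, Measure.pi_pi]
  · intro t1 h1 t2 h2 hne
    simp only [Function.onFun, Set.disjoint_left, Set.mem_preimage, Set.mem_singleton_iff]
    rintro s rfl h
    exact hne h

lemma per_coord_eq (p pt : PMF X) (H : Finset X) (hH : ∀ x ∈ H, pt x = p x) (a : Option X) :
    pt.toMeasure (r0 H ⁻¹' {a}) = p.toMeasure (r0 H ⁻¹' {a}) := by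
  cases a with
  | none =>
    have hpre : r0 H ⁻¹' {none} = (↑H : Set X)ᶜ := by
      ext y
      simp only [Set.mem_preimage, Set.mem_singleton_iff, r0, Set.mem_compl_iff,
        Finset.mem_coe]
      by_cases hy : y ∈ H <;> simp [hy]
    rw [hpre, prob_compl_eq_one_sub (measAll _), prob_compl_eq_one_sub (measAll _)]
    congr 1
    rw [PMF.toMeasure_apply_finset, PMF.toMeasure_apply_finset]
    exact Finset.sum_congr rfl hH
  | some x =>
    have hpre : r0 H ⁻¹' {some x} = if x ∈ H then ({x} : Set X) else ∅ := by
      ext y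
      simp only [Set.mem_preimage, Set.mem_singleton_iff, r0]
      by_cases hy : y ∈ H
      · simp only [hy, if_true, Option.some.injEq]
        by_cases hx : x ∈ H
        · simp [hx, eq_comm]
        · simp only [hx, if_false, Set.mem_empty_iff_false, iff_false]
          rintro rfl; exact hx hy
      · simp only [hy, if_false]
        constructor
        · intro h; exact absurd h (by simp)
        · intro h
          by_cases hx : x ∈ H
          · simp only [hx, if_true, Set.mem_singleton_iff] at h
            exact absurd (h ▸ hy) (fun hh => hh hx)
          · simp [hx] at h
    rw [hpre]
    by_cases hx : x ∈ H
    · simp only [hx, if_true]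
      rw [pt.toMeasure_apply_singleton x (measurableSet_singleton x),
        p.toMeasure_apply_singleton x (measurableSet_singleton x), hH x hx]
    · simp [hx]

lemma measure_preimage_headMap_eq (N : ℕ) (p pt : PMF X) (H : Finset X)
    (hH : ∀ x ∈ H, pt x = p x) (C : Set (Fin N → Option X)) :
    (Measure.pi fun _ : Fin N => pt.toMeasure) (headMap H N ⁻¹' C)
      = (Measure.pi fun _ : Fin N => p.toMeasure) (headMap H N ⁻¹' C) := by
  rw [measure_preimage_headMap, measure_preimage_headMap]
  exact tsum_congr fun t => Finset.prod_congr rfl fun i _ => per_coord_eq p pt H hH _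

/-- The type of a reduced tuple: the type of the head part, plus one singleton
for each `none`. -/
noncomputable def optType {N : ℕ} (t : Fin N → Option X) : ℕ → ℕ :=
  fun j => multisetType ((Multiset.ofList (List.ofFn t)).filterMap id) j
    + if j = 1 then (Multiset.ofList (List.ofFn t)).count none else 0

lemma count_ofFn {N : ℕ} (s : Fin N → X) (x : X) :
    (Multiset.ofList (List.ofFn s)).count x = (Finset.univ.filter fun i => x = s i).card := by
  rw [List.ofFn_eq_map]
  have h1 : (Multiset.ofList ((List.finRange N).map s)) = Multiset.map s ↑(List.finRange N) := rfl
  rw [h1, Multiset.count_map]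
  rfl

lemma count_le_one_of_NC {H : Finset X} {N : ℕ} {s : Fin N → X} (hs : s ∈ NCset H N)
    {x : X} (hx : x ∉ H) : (Multiset.ofList (List.ofFn s)).count x ≤ 1 := by
  rw [count_ofFn]
  rw [Finset.card_le_one]
  intro i hi j hj
  simp only [Finset.mem_filter, Finset.mem_univ, true_and] at hi hj
  by_contra hne
  rcases lt_or_gt_of_ne hne with h | h
  · exact hx (hi ▸ hs i j h (hi ▸ hj ▸ rfl))
  · exact hx (hj ▸ hs j i h (hj ▸ hi ▸ rfl))

lemma type_split (H : Finset X) (S : Multiset X) (hcount : ∀ x ∉ H, S.count x ≤ 1) (j : ℕ) :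
    multisetType S j = multisetType (S.filter (· ∈ H)) j
      + (if j = 1 then (S.filter (fun x => x ∉ H)).card else 0) := by
  classical
  have hsplit := Finset.card_filter_add_card_filter_not
    (s := S.toFinset.filter fun x => S.count x = j) (p := fun x => x ∈ H)
  rw [multisetType]
  rw [← hsplit]
  congr 1
  · -- head part
    rw [multisetType]
    rw [Finset.filter_comm]
    rw [Multiset.toFinset_filter]
    congr 1
    apply Finset.filter_congr
    intro x hx
    rw [Finset.mem_filter] at hx
    rw [Multiset.count_filter]
    simp only [hx.2, if_true]
  · -- tail part
    rw [Finset.filter_comm]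
    have hFt : S.toFinset.filter (fun x => ¬ x ∈ H) = (S.filter fun x => x ∉ H).toFinset := by
      rw [Multiset.toFinset_filter]
    have hone : ∀ x ∈ S.toFinset.filter (fun x => ¬ x ∈ H), S.count x = 1 := by
      intro x hx
      rw [Finset.mem_filter, Multiset.mem_toFinset] at hx
      have h1 : 1 ≤ S.count x := Multiset.one_le_count_iff_mem.2 hx.1
      have h2 := hcount x hx.2
      omega
    by_cases hj : j = 1
    · subst hj
      rw [Finset.filter_true_of_mem fun x hx => hone x hx, if_pos rfl, hFt]
      rw [Multiset.toFinset_card_of_nodup]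
      rw [Multiset.nodup_iff_count_le_one]
      intro x
      rw [Multiset.count_filter]
      by_cases hx : x ∉ H
      · simp only [hx, if_true]
        exact hcount x hx
      · simp [hx]
    · rw [Finset.filter_false_of_mem, if_neg hj, Finset.card_empty]
      intro x hx
      rw [hone x hx]
      omega

lemma type_eq_on_NC (H : Finset X) (N : ℕ) (s : Fin N → X) (hs : s ∈ NCset H N) :
    multisetType (Multiset.ofList (List.ofFn s)) = optType (headMap H N s) := by
  set S := Multiset.ofList (List.ofFn s) with hS
  have hmap : Multiset.ofList (List.ofFn (headMap H N s)) = S.map (r0 H) := by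
    rw [hS]
    have : List.ofFn (headMap H N s) = (List.ofFn s).map (r0 H) := by
      rw [List.map_ofFn]; rfl
    rw [this]
    rfl
  have hr0 : r0 H = Option.guard (fun x => x ∈ H) := by
    funext x
    simp [r0, Option.guard]
  funext j
  rw [optType, hmap]
  have hhead : (S.map (r0 H)).filterMap id = S.filter (· ∈ H) := by
    rw [Multiset.filterMap_map]
    have : (id ∘ r0 H) = Option.guard (fun x => x ∈ H) := by
      rw [← hr0]; rfl
    rw [this, Multiset.filterMap_eq_filter]
  have htail : (S.map (r0 H)).count none = (S.filter fun x => x ∉ H).card := by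
    rw [Multiset.count_map]
    congr 1
    apply Multiset.filter_congr
    intro x _
    simp only [hr0, Option.guard, eq_comm (a := (none : Option X))]
    by_cases hx : x ∈ H <;> simp [hx]
  rw [hhead, htail]
  exact type_split H S (fun x hx => count_le_one_of_NC hs hx) j

/-- Existence of the adversarial distribution: agrees with `p` on `H`, spreads the remaining
mass uniformly on `T`. -/
lemma exists_ptilde (p : PMF X) (H T : Finset X) (hd : Disjoint H T) (hT : T.card ≠ 0) :
    ∃ pt : PMF X, (∀ x ∈ H, pt x = p x) ∧
      (∀ x ∉ H, x ∈ T → pt x = (1 - ∑ y ∈ H, p y) / T.card) ∧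
      (∀ x ∉ H, x ∉ T → pt x = 0) := by
  classical
  set q : ℝ≥0∞ := 1 - ∑ y ∈ H, p y with hq
  set f : X → ℝ≥0∞ := fun x => if x ∈ H then p x else if x ∈ T then q / T.card else 0 with hf
  have hHle : ∑ y ∈ H, p y ≤ 1 := by
    rw [← p.tsum_coe]
    exact ENNReal.sum_le_tsum H
  have htsum : ∑' x, f x = 1 := by
    rw [tsum_eq_sum (s := H ∪ T) ?_]
    · rw [Finset.sum_union hd]
      have h1 : ∑ x ∈ H, f x = ∑ x ∈ H, p x :=
        Finset.sum_congr rfl fun x hx => by simp [hf, hx]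
      have h2 : ∑ x ∈ T, f x = q := by
        have : ∀ x ∈ T, f x = q / T.card := by
          intro x hx
          have hxH : x ∉ H := fun hh => (Finset.disjoint_left.1 hd) hh hx
          simp [hf, hxH, hx]
        rw [Finset.sum_congr rfl this, Finset.sum_const, nsmul_eq_mul]
        exact ENNReal.mul_div_cancel (by exact_mod_cast hT) (ENNReal.natCast_ne_top _)
      rw [h1, h2, hq, add_tsub_cancel_of_le hHle]
    · intro x hx
      simp only [Finset.mem_union, not_or] at hx
      simp [hf, hx.1, hx.2]
  refine ⟨⟨f, ENNReal.summable.hasSum_iff.2 htsum⟩, ?_, ?_, ?_⟩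
  · intro x hx; show f x = _; simp [hf, hx]
  · intro x hx hxT; show f x = _; simp [hf, hx, hxT]
  · intro x hx hxT; show f x = _; simp [hf, hx, hxT]

/-- A set of at most `M` elements outside of which all probabilities are at most `1/M`. -/
lemma exists_head (p : PMF X) (M : ℕ) (hM : M ≠ 0) :
    ∃ H : Finset X, H.card ≤ M ∧ ∀ x ∉ H, p x ≤ (M : ℝ≥0∞)⁻¹ := by
  classical
  have hne : ∑' x, p x ≠ ⊤ := by rw [p.tsum_coe]; exact ENNReal.one_ne_top
  have hfin : {x | (M : ℝ≥0∞)⁻¹ ≤ p x}.Finite :=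
    ENNReal.finite_const_le_of_tsum_ne_top hne
      (ENNReal.inv_ne_zero.2 (ENNReal.natCast_ne_top _))
  refine ⟨hfin.toFinset, ?_, ?_⟩
  · -- card bound
    have hsum : (hfin.toFinset.card : ℝ≥0∞) * (M : ℝ≥0∞)⁻¹ ≤ 1 := by
      calc (hfin.toFinset.card : ℝ≥0∞) * (M : ℝ≥0∞)⁻¹
          = ∑ _x ∈ hfin.toFinset, (M : ℝ≥0∞)⁻¹ := by
            rw [Finset.sum_const, nsmul_eq_mul]
        _ ≤ ∑ x ∈ hfin.toFinset, p x := by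
            refine Finset.sum_le_sum fun x hx => ?_
            exact (hfin.mem_toFinset.1 hx)
        _ ≤ ∑' x, p x := ENNReal.sum_le_tsum _
        _ = 1 := p.tsum_coe
    have hM' : (M : ℝ≥0∞) ≠ 0 := by exact_mod_cast hM
    have hle : (hfin.toFinset.card : ℝ≥0∞) ≤ M := by
      calc (hfin.toFinset.card : ℝ≥0∞)
          = hfin.toFinset.card * (M : ℝ≥0∞)⁻¹ * M := by
            rw [mul_assoc, ENNReal.inv_mul_cancel hM' (ENNReal.natCast_ne_top _), mul_one]
        _ ≤ 1 * M := mul_le_mul_left hsum _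
        _ = M := one_mul _
    exact_mod_cast hle
  · intro x hx
    rw [Set.Finite.mem_toFinset, Set.mem_setOf_eq, not_le] at hx
    exact hx.le

open Real in
lemma entropy_le_log_card (p : PMF X) (D : Finset X) (hD : ∀ x ∉ D, p x = 0)
    (hD0 : D.Nonempty) :
    ∑' x, -((p x).toReal * Real.log (p x).toReal) ≤ Real.log D.card := by
  classical
  have hterm : ∀ x, -((p x).toReal * Real.log (p x).toReal) = negMulLog ((p x).toReal) := by
    intro x; rw [negMulLog_eq_neg]
  have hzero : ∀ x ∉ D, -((p x).toReal * Real.log (p x).toReal) = 0 := by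
    intro x hx; rw [hD x hx]; simp
  rw [tsum_eq_sum hzero]
  have hne : ∀ x ∈ D, p x ≠ ∞ := fun x _ => p.apply_ne_top x
  have hsum1 : ∑ x ∈ D, (p x).toReal = 1 := by
    have h1 : ∑ x ∈ D, p x = 1 := by
      rw [← p.tsum_coe, tsum_eq_sum hD]
    have := ENNReal.toReal_sum (s := D) (f := fun x => p x) hne
    rw [h1] at this
    simpa using this.symm
  set n := D.card with hn
  have hn0 : 0 < n := Finset.card_pos.2 hD0
  have hnR : (0:ℝ) < n := by exact_mod_cast hn0
  have hjensen := concaveOn_negMulLog.le_map_sum (t := D) (w := fun _ => (n:ℝ)⁻¹)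
    (p := fun x => (p x).toReal) (fun _ _ => by positivity)
    (by rw [Finset.sum_const, nsmul_eq_mul]; field_simp; rw [hn])
    (fun x _ => ENNReal.toReal_nonneg)
  have hcenter : ∑ x ∈ D, (n:ℝ)⁻¹ • (p x).toReal = (n:ℝ)⁻¹ := by
    rw [← Finset.smul_sum, hsum1, smul_eq_mul, mul_one]
  rw [hcenter] at hjensen
  have hval : negMulLog ((n:ℝ)⁻¹) = (n:ℝ)⁻¹ * Real.log n := by
    rw [negMulLog, Real.log_inv]; ring
  rw [hval] at hjensen
  have hsmul : ∑ x ∈ D, (n:ℝ)⁻¹ • negMulLog ((p x).toReal)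
      = (n:ℝ)⁻¹ * ∑ x ∈ D, negMulLog ((p x).toReal) := by
    rw [← Finset.smul_sum]; rfl
  rw [hsmul] at hjensen
  have hfin : ∑ x ∈ D, negMulLog ((p x).toReal) ≤ Real.log n :=
    le_of_mul_le_mul_left hjensen (by positivity)
  exact le_trans (le_of_eq (Finset.sum_congr rfl fun x _ => hterm x)) hfin

end Aux
end EntropyLimitAux

open EntropyLimitAux

/-- Limitation on distribution-free high-confidence lower bounds on entropy:
any such bound `B` computed from the type of `N` samples is at most
`ln (2kN²)` with probability at least `1 - δ - 1.01/k`. -/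
theorem entropy_lower_bound_limitation {X : Type*} [Countable X]
    [DecidableEq X] [MeasurableSpace X] [MeasurableSingletonClass X]
    (N k : ℕ) (hN : 50 ≤ N) (hk : 2 ≤ k) (δ : ℝ) (hδ : 0 < δ ∧ δ < 1)
    (B : (ℕ → ℕ) → ℝ → ℝ)
    (hB : ∀ p : PMF X,
      (Measure.pi fun _ : Fin N => p.toMeasure)
          {s | B (multisetType (Multiset.ofList (List.ofFn s))) δ ≤
            ∑' x, -((p x).toReal * Real.log (p x).toReal)} ≥
        ENNReal.ofReal (1 - δ)) :
    ∀ p : PMF X,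
      (Measure.pi fun _ : Fin N => p.toMeasure)
          {s | B (multisetType (Multiset.ofList (List.ofFn s))) δ ≤
            Real.log (2 * k * N ^ 2)} ≥
        ENNReal.ofReal (1 - δ - 1.01 / k) := by
  classical
  intro p
  have hNempty : Nonempty X := ⟨p.support_nonempty.choose⟩
  set M := k * N ^ 2 with hMdef
  have hM0 : M ≠ 0 := by positivity
  have hkR : (1:ℝ) ≤ (k:ℝ) := by exact_mod_cast (by omega : 1 ≤ k)
  set c : ℝ := Real.log (2 * (k:ℝ) * (N:ℝ) ^ 2) with hc
  set A : Set (Fin N → X) :=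
    {s | B (multisetType (Multiset.ofList (List.ofFn s))) δ ≤ c} with hA
  set μ := Measure.pi fun _ : Fin N => p.toMeasure with hμ
  -- helper for the degenerate small-universe case
  have hfallback : (∑' x, -((p x).toReal * Real.log (p x).toReal) ≤ c) →
      ENNReal.ofReal (1 - δ - 1.01 / k) ≤ μ A := by
    intro hent
    refine le_trans (ENNReal.ofReal_le_ofReal ?_) (le_trans (hB p) (measure_mono ?_))
    · have : (0:ℝ) ≤ 1.01 / k := by positivity
      linarith
    · intro s hs
      exact le_trans hs hent
  obtain ⟨H, hHcard, hHtail⟩ := exists_head p M hM0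
  -- find the tail support `T` or conclude the universe is small
  have hTcases : (∃ T : Finset X, Disjoint H T ∧ T.card = M) ∨
      (∃ D : Finset X, (∀ x : X, x ∈ D) ∧ D.card ≤ 2 * M) := by
    cases finite_or_infinite X with
    | inr hinf =>
      left
      obtain ⟨T, hTsub, hTcard⟩ := (H.finite_toSet.infinite_compl).exists_subset_card_eq M
      refine ⟨T, ?_, hTcard⟩
      rw [Finset.disjoint_left]
      intro x hxH hxT
      exact (hTsub hxT) hxH
    | inl hfin =>
      have : Fintype X := Fintype.ofFinite X
      rcases le_or_gt M (Finset.univ \ H).card with hle | hlt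
      · left
        obtain ⟨T, hTsub, hTcard⟩ := Finset.exists_subset_card_eq hle
        refine ⟨T, ?_, hTcard⟩
        rw [Finset.disjoint_left]
        intro x hxH hxT
        exact (Finset.mem_sdiff.1 (hTsub hxT)).2 hxH
      · right
        refine ⟨Finset.univ, fun x => Finset.mem_univ x, ?_⟩
        have h1 : (Finset.univ \ H).card = Finset.univ.card - H.card :=
          Finset.card_sdiff_of_subset (Finset.subset_univ H)
        have h2 : H.card ≤ Finset.univ.card := Finset.card_le_univ H
        omega
  -- a convenient form of the log comparison
  have hlogle : ∀ n : ℕ, n ≠ 0 → n ≤ 2 * M → Real.log n ≤ c := by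
    intro n hn hle
    rw [hc]
    apply Real.log_le_log (by positivity : (0:ℝ) < (n:ℝ))
    have : ((n:ℝ)) ≤ ((2 * M : ℕ) : ℝ) := by exact_mod_cast hle
    refine le_trans this ?_
    rw [hMdef]
    push_cast
    ring_nf
    exact le_refl _
  rcases hTcases with ⟨T, hdisj, hTcard⟩ | ⟨D, hDall, hDcard⟩
  · -- main case
    obtain ⟨pt, hptH, hptT, hpt0⟩ := exists_ptilde p H T hdisj (hTcard ▸ hM0)
    set μt := Measure.pi fun _ : Fin N => pt.toMeasure with hμt
    -- tail bound for pt
    have hpttail : ∀ x ∉ H, pt x ≤ (M : ℝ≥0∞)⁻¹ := by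
      intro x hx
      by_cases hxT : x ∈ T
      · rw [hptT x hx hxT, hTcard]
        calc (1 - ∑ y ∈ H, p y) / (M : ℝ≥0∞) ≤ 1 / (M : ℝ≥0∞) :=
            ENNReal.div_le_div_right tsub_le_self _
          _ = (M : ℝ≥0∞)⁻¹ := one_div _
      · rw [hpt0 x hx hxT]
        exact zero_le
    -- entropy bound for pt
    have hTne : T.Nonempty := Finset.card_pos.1 (by omega : 0 < T.card)
    have hentpt : ∑' x, -((pt x).toReal * Real.log (pt x).toReal) ≤ c := by
      refine le_trans (entropy_le_log_card pt (H ∪ T) ?_ ?_) ?_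
      · intro x hx
        rw [Finset.mem_union, not_or] at hx
        exact hpt0 x hx.1 hx.2
      · exact Finset.Nonempty.inr hTne
      · refine hlogle _ ?_ ?_
        · have : 0 < (H ∪ T).card :=
            Finset.card_pos.2 (Finset.Nonempty.inr hTne)
          omega
        · calc (H ∪ T).card ≤ H.card + T.card := Finset.card_union_le H T
            _ ≤ M + M := by omega
            _ = 2 * M := by ring
    -- events
    have hA1 : ENNReal.ofReal (1 - δ) ≤ μt A := by
      refine le_trans (hB pt) (measure_mono ?_)
      intro s hs
      exact le_trans hs hentpt
    set NC := NCset H N with hNC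
    set C : Set (Fin N → Option X) := {t | B (optType t) δ ≤ c} with hC
    have hACNC : A ∩ NC = (headMap H N ⁻¹' C) ∩ NC := by
      ext s
      simp only [Set.mem_inter_iff, Set.mem_setOf_eq, Set.mem_preimage, hA, hC]
      constructor
      · rintro ⟨h1, h2⟩
        exact ⟨by rw [← type_eq_on_NC H N s h2]; exact h1, h2⟩
      · rintro ⟨h1, h2⟩
        exact ⟨by rw [type_eq_on_NC H N s h2]; exact h1, h2⟩
    -- collision bounds
    have hcoll : ∀ (q : PMF X), (∀ x ∉ H, q x ≤ (M : ℝ≥0∞)⁻¹) →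
        (Measure.pi fun _ : Fin N => q.toMeasure) NCᶜ ≤ ENNReal.ofReal (0.505 / k) := by
      intro q hq
      refine le_trans (collision_bound N q H M hq) ?_
      have := pairs_bound N k (by omega) (by omega)
      rw [← hMdef] at this
      exact this
    have hNCp : μ NCᶜ ≤ ENNReal.ofReal (0.505 / k) := hcoll p hHtail
    have hNCpt : μt NCᶜ ≤ ENNReal.ofReal (0.505 / k) := hcoll pt hpttail
    -- splitting along NC
    have hsplit : ∀ (ν : Measure (Fin N → X)) (E : Set (Fin N → X)),
        ν E ≤ ν (E ∩ NC) + ν NCᶜ := by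
      intro ν E
      calc ν E ≤ ν ((E ∩ NC) ∪ NCᶜ) := by
            refine measure_mono ?_
            intro s hs
            by_cases h : s ∈ NC
            · exact Or.inl ⟨hs, h⟩
            · exact Or.inr h
        _ ≤ ν (E ∩ NC) + ν NCᶜ := measure_union_le _ _
    -- the chain of inequalities
    have hkey : ENNReal.ofReal (1 - δ) ≤ μ A + ENNReal.ofReal (0.505 / k)
        + ENNReal.ofReal (0.505 / k) := by
      have h1 : μt A ≤ μt (A ∩ NC) + μt NCᶜ := hsplit μt A
      have h2 : μt (A ∩ NC) ≤ μt (headMap H N ⁻¹' C) := by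
        rw [hACNC]
        exact measure_mono Set.inter_subset_left
      have h3 : μt (headMap H N ⁻¹' C) = μ (headMap H N ⁻¹' C) :=
        measure_preimage_headMap_eq N p pt H hptH C
      have h4 : μ (headMap H N ⁻¹' C) ≤ μ ((headMap H N ⁻¹' C) ∩ NC) + μ NCᶜ :=
        hsplit μ _
      have h5 : μ ((headMap H N ⁻¹' C) ∩ NC) ≤ μ A := by
        rw [← hACNC]
        exact measure_mono Set.inter_subset_left
      calc ENNReal.ofReal (1 - δ) ≤ μt A := hA1
        _ ≤ μt (A ∩ NC) + μt NCᶜ := h1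
        _ ≤ μ (headMap H N ⁻¹' C) + ENNReal.ofReal (0.505 / k) := by
            rw [← h3]
            exact add_le_add h2 hNCpt
        _ ≤ (μ A + μ NCᶜ) + ENNReal.ofReal (0.505 / k) := by
            refine add_le_add_left ?_ _
            exact le_trans h4 (add_le_add_left h5 _)
        _ ≤ μ A + ENNReal.ofReal (0.505 / k) + ENNReal.ofReal (0.505 / k) := by
            refine add_le_add_left (add_le_add_right hNCp _) _
    -- conclude
    have hkey2 : ENNReal.ofReal (1 - δ) ≤ μ A + ENNReal.ofReal (1.01 / k) := by
      refine le_trans hkey ?_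
      rw [add_assoc, ← ENNReal.ofReal_add (by positivity) (by positivity)]
      have : (0.505 / k + 0.505 / k : ℝ) = 1.01 / k := by ring
      rw [this]
    have hgoal : ENNReal.ofReal (1 - δ - 1.01 / k) ≤ μ A := by
      rw [ENNReal.ofReal_sub _ (by positivity)]
      exact tsub_le_iff_right.2 hkey2
    exact hgoal
  · -- small universe case
    refine hfallback ?_
    refine le_trans (entropy_le_log_card p D (fun x hx => absurd (hDall x) hx) ?_) ?_
    · exact ⟨Classical.arbitrary X, hDall _⟩
    · refine hlogle _ ?_ hDcard
      have : 0 < D.card := Finset.card_pos.2 ⟨Classical.arbitrary X, hDall _⟩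
      omega
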